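/- Suppose the trajectories (s_t) and (s'_t) generated from initial states s_0, s'_0 satisfy ‖s'_t - s_t‖ ≤ K₁ δ e^{λt} for all t, where δ = ‖s'_0 - s_0‖, and the per-step cost c : S → ℝ satisfies both a Lipschitz bound |c(s) - c(s')| ≤ K₂‖s - s'‖ and a uniform bound |c(s)| ≤ M₂ on S. If λ > -log γ with γ ∈ (0,1), then |Σ_{t=0}^∞ γ^t c(s'_t) - Σ_{t=0}^∞ γ^t c(s_t)| ≤ C δ^{(-log γ)/λ} for some constant C depending only on K₁, K₂, M₂, γ, λ (and not on δ), for all sufficiently small δ > 0. That is, the value function is ((-log γ)/λ)-Hölder continuous in the initial state. -/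

import Mathlib

open Set

set_option maxHeartbeats 1000000 in
theorem stmt2 (n : ℕ) (γ lam K₁ K₂ M₂ : ℝ) (hγ : γ ∈ Ioo (0 : ℝ) 1)
    (hlam : -Real.log γ < lam) (hK₁ : 0 < K₁) (hK₂ : 0 < K₂) (hM₂ : 0 < M₂)
    (c : EuclideanSpace ℝ (Fin n) → ℝ)
    (hLip : ∀ x y, |c x - c y| ≤ K₂ * ‖x - y‖)
    (hBdd : ∀ x, |c x| ≤ M₂) :
    ∃ C > 0, ∃ δ₀ > 0, ∀ s s' : ℕ → EuclideanSpace ℝ (Fin n),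
      0 < ‖s' 0 - s 0‖ → ‖s' 0 - s 0‖ < δ₀ →
      (∀ t : ℕ, ‖s' t - s t‖ ≤ K₁ * ‖s' 0 - s 0‖ * Real.exp (lam * t)) →
      |(∑' t : ℕ, γ ^ t * c (s' t)) - ∑' t : ℕ, γ ^ t * c (s t)| ≤
        C * ‖s' 0 - s 0‖ ^ ((-Real.log γ) / lam) := by
  obtain ⟨hγ0, hγ1⟩ := hγ
  have hlogγ : Real.log γ < 0 := Real.log_neg hγ0 hγ1
  have hlam0 : 0 < lam := lt_trans (by linarith) hlam
  have hr1 : 1 < γ * Real.exp lam := by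
    rw [← Real.exp_log hγ0, ← Real.exp_add]
    have : (0:ℝ) < Real.log γ + lam := by linarith
    calc (1:ℝ) = Real.exp 0 := (Real.exp_zero).symm
    _ < _ := Real.exp_lt_exp.mpr this
  have hD : (0:ℝ) < γ * Real.exp lam - 1 := by linarith
  have h1γ : (0:ℝ) < 1 - γ := by linarith
  set C : ℝ := K₁ * K₂ * Real.exp lam / (γ * Real.exp lam - 1) + 2 * M₂ / (1 - γ) with hC
  have hCpos : 0 < C := by
    apply add_pos
    · exact div_pos (by positivity) hD
    · exact div_pos (by positivity) h1γ
  refine ⟨C, hCpos, 1, one_pos, ?_⟩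
  intro s s' hδ0 hδ1 htraj
  set δ : ℝ := ‖s' 0 - s 0‖ with hδ
  set α : ℝ := -Real.log γ / lam with hα
  have hlogδ : Real.log δ < 0 := Real.log_neg hδ0 hδ1
  set T : ℕ := ⌈-Real.log δ / lam⌉₊ with hT
  have hTarg : 0 ≤ -Real.log δ / lam := div_nonneg (by linarith) hlam0.le
  have hT1 : -Real.log δ / lam ≤ (T:ℝ) := Nat.le_ceil _
  have hT2 : (T:ℝ) ≤ -Real.log δ / lam + 1 := le_of_lt (Nat.ceil_lt_add_one hTarg)
  -- key power bounds
  have hpow1 : γ ^ T ≤ δ ^ α := by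
    have h1 : γ ^ T = Real.exp ((T:ℝ) * Real.log γ) := by
      rw [Real.exp_nat_mul, Real.exp_log hγ0]
    have h2 : δ ^ α = Real.exp (α * Real.log δ) := by
      rw [Real.rpow_def_of_pos hδ0]
      ring_nf
    rw [h1, h2]
    apply Real.exp_le_exp.mpr
    have h3 : (T:ℝ) * Real.log γ ≤ (-Real.log δ / lam) * Real.log γ :=
      mul_le_mul_of_nonpos_right hT1 hlogγ.le
    refine h3.trans_eq ?_
    rw [hα]; ring
  have hpow2 : (γ * Real.exp lam) ^ T ≤ δ ^ (α - 1) * Real.exp lam := by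
    have h1 : (γ * Real.exp lam) ^ T = Real.exp ((T:ℝ) * (Real.log γ + lam)) := by
      rw [Real.exp_nat_mul, Real.exp_add, Real.exp_log hγ0]
    have h2 : δ ^ (α - 1) * Real.exp lam = Real.exp ((α - 1) * Real.log δ + lam) := by
      rw [Real.exp_add, Real.rpow_def_of_pos hδ0]
      ring_nf
    rw [h1, h2]
    apply Real.exp_le_exp.mpr
    have hpos : (0:ℝ) ≤ Real.log γ + lam := by linarith
    have h3 : (T:ℝ) * (Real.log γ + lam) ≤ (-Real.log δ / lam + 1) * (Real.log γ + lam) :=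
      mul_le_mul_of_nonneg_right hT2 hpos
    refine h3.trans ?_
    have key : (-Real.log δ / lam + 1) * (Real.log γ + lam)
        = ((α - 1) * Real.log δ + lam) + (-Real.log δ / lam * lam + Real.log δ) + Real.log γ := by
      rw [hα]; ring
    have hcancel : -Real.log δ / lam * lam + Real.log δ = 0 := by
      field_simp
      ring
    rw [key, hcancel]
    linarith
  -- summability
  have hgeo : Summable (fun t : ℕ => γ ^ t) := summable_geometric_of_lt_one hγ0.le hγ1
  have hsum : ∀ u : ℕ → EuclideanSpace ℝ (Fin n), Summable (fun t => γ ^ t * c (u t)) := by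
    intro u
    apply Summable.of_norm_bounded (hgeo.mul_left M₂)
    intro t
    rw [norm_mul, norm_pow, Real.norm_eq_abs, Real.norm_eq_abs, abs_of_pos hγ0, mul_comm]
    exact mul_le_mul_of_nonneg_right (hBdd _) (by positivity)
  have habs : Summable (fun t => |γ ^ t * (c (s' t) - c (s t))|) := by
    apply Summable.of_nonneg_of_le (fun t => abs_nonneg _) (fun t => ?_) (hgeo.mul_left (2 * M₂))
    rw [abs_mul, abs_pow, abs_of_pos hγ0, mul_comm]
    apply mul_le_mul_of_nonneg_right _ (by positivity)
    calc |c (s' t) - c (s t)| ≤ |c (s' t)| + |c (s t)| := abs_sub _ _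
    _ ≤ M₂ + M₂ := add_le_add (hBdd _) (hBdd _)
    _ = 2 * M₂ := by ring
  have heq : (∑' t : ℕ, γ ^ t * c (s' t)) - ∑' t : ℕ, γ ^ t * c (s t)
      = ∑' t : ℕ, γ ^ t * (c (s' t) - c (s t)) := by
    rw [← Summable.tsum_sub (hsum s') (hsum s)]
    congr 1; funext t; ring
  rw [heq]
  have habs_le : |∑' t : ℕ, γ ^ t * (c (s' t) - c (s t))|
      ≤ ∑' t : ℕ, |γ ^ t * (c (s' t) - c (s t))| := by
    have h := norm_tsum_le_tsum_norm (f := fun t : ℕ => γ ^ t * (c (s' t) - c (s t)))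
      (by simpa only [Real.norm_eq_abs] using habs)
    simpa only [Real.norm_eq_abs] using h
  refine habs_le.trans ?_
  rw [← Summable.sum_add_tsum_nat_add T habs]
  have hhead : ∑ i ∈ Finset.range T, |γ ^ i * (c (s' i) - c (s i))|
      ≤ K₁ * K₂ * δ * ((γ * Real.exp lam) ^ T / (γ * Real.exp lam - 1)) := by
    have hterm : ∀ i, |γ ^ i * (c (s' i) - c (s i))| ≤ K₁ * K₂ * δ * (γ * Real.exp lam) ^ i := by
      intro i
      rw [abs_mul, abs_pow, abs_of_pos hγ0, mul_pow, ← Real.exp_nat_mul, mul_comm (i:ℝ) lam]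
      calc γ ^ i * |c (s' i) - c (s i)| ≤ γ ^ i * (K₂ * (K₁ * δ * Real.exp (lam * i))) := by
            apply mul_le_mul_of_nonneg_left _ (by positivity)
            exact (hLip _ _).trans (mul_le_mul_of_nonneg_left (htraj i) hK₂.le)
      _ = K₁ * K₂ * δ * (γ ^ i * Real.exp (lam * i)) := by ring
    calc ∑ i ∈ Finset.range T, |γ ^ i * (c (s' i) - c (s i))|
        ≤ ∑ i ∈ Finset.range T, K₁ * K₂ * δ * (γ * Real.exp lam) ^ i :=
          Finset.sum_le_sum (fun i _ => hterm i)
    _ = K₁ * K₂ * δ * ∑ i ∈ Finset.range T, (γ * Real.exp lam) ^ i := by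
          rw [Finset.mul_sum]
    _ ≤ K₁ * K₂ * δ * ((γ * Real.exp lam) ^ T / (γ * Real.exp lam - 1)) := by
          apply mul_le_mul_of_nonneg_left _ (by positivity)
          rw [geom_sum_eq (ne_of_gt hr1)]
          gcongr
          linarith
  have htail : (∑' i : ℕ, |γ ^ (i + T) * (c (s' (i + T)) - c (s (i + T)))|)
      ≤ 2 * M₂ * γ ^ T / (1 - γ) := by
    have hb : ∀ i : ℕ, |γ ^ (i + T) * (c (s' (i + T)) - c (s (i + T)))|
        ≤ 2 * M₂ * γ ^ T * γ ^ i := by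
      intro i
      rw [abs_mul, abs_pow, abs_of_pos hγ0, pow_add]
      calc γ ^ i * γ ^ T * |c (s' (i + T)) - c (s (i + T))|
          ≤ γ ^ i * γ ^ T * (2 * M₂) := by
            apply mul_le_mul_of_nonneg_left _ (by positivity)
            calc |c (s' (i + T)) - c (s (i + T))| ≤ |c (s' (i + T))| + |c (s (i + T))| :=
                  abs_sub _ _
            _ ≤ M₂ + M₂ := add_le_add (hBdd _) (hBdd _)
            _ = 2 * M₂ := by ring
      _ = 2 * M₂ * γ ^ T * γ ^ i := by ring
    calc (∑' i : ℕ, |γ ^ (i + T) * (c (s' (i + T)) - c (s (i + T)))|)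
        ≤ ∑' i : ℕ, 2 * M₂ * γ ^ T * γ ^ i :=
          Summable.tsum_le_tsum hb ((summable_nat_add_iff T).mpr habs) (hgeo.mul_left (2 * M₂ * γ ^ T))
    _ = 2 * M₂ * γ ^ T * (1 - γ)⁻¹ := by
          rw [tsum_mul_left, tsum_geometric_of_lt_one hγ0.le hγ1]
    _ = 2 * M₂ * γ ^ T / (1 - γ) := by rw [div_eq_mul_inv]
  have hmul : δ * δ ^ (α - 1) = δ ^ α := by
    calc δ * δ ^ (α - 1) = δ ^ (1:ℝ) * δ ^ (α - 1) := by rw [Real.rpow_one]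
    _ = δ ^ (1 + (α - 1)) := (Real.rpow_add hδ0 _ _).symm
    _ = δ ^ α := by congr 1; ring
  calc (∑ i ∈ Finset.range T, |γ ^ i * (c (s' i) - c (s i))|)
        + ∑' i : ℕ, |γ ^ (i + T) * (c (s' (i + T)) - c (s (i + T)))|
      ≤ K₁ * K₂ * δ * ((γ * Real.exp lam) ^ T / (γ * Real.exp lam - 1))
        + 2 * M₂ * γ ^ T / (1 - γ) := add_le_add hhead htail
  _ ≤ K₁ * K₂ * δ * (δ ^ (α - 1) * Real.exp lam / (γ * Real.exp lam - 1))
        + 2 * M₂ * δ ^ α / (1 - γ) := by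
      apply add_le_add
      · apply mul_le_mul_of_nonneg_left _ (by positivity)
        gcongr
      · gcongr
  _ = C * δ ^ α := by
      have e1 : K₁ * K₂ * δ * (δ ^ (α - 1) * Real.exp lam / (γ * Real.exp lam - 1))
          = K₁ * K₂ * Real.exp lam / (γ * Real.exp lam - 1) * (δ * δ ^ (α - 1)) := by
        ring
      rw [e1, hmul, hC]
      ring
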